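/- Let d ≥ 1 and n ≥ 3d + 2 be integers. If G is an n-vertex graph with minimum degree δ(G) ≥ d and maximum degree Δ(G) ≤ n − 2d − 1, then G admits a matching of size d + 1. -/

import Mathlib

open Finset

/-- Extension lemma: a pairwise-disjoint family of `k ≤ d` edges can be extended to `k+1`. -/
lemma statement9_extend (d n k : ℕ) (hd : 1 ≤ d) (hn : 3 * d + 2 ≤ n)
    (G : SimpleGraph (Fin n)) [DecidableRel G.Adj]
    (hmin : ∀ v, d ≤ G.degree v)
    (hmax : ∀ v, G.degree v + 2 * d + 1 ≤ n)
    (hk : k ≤ d)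
    (f : Fin k → Fin n × Fin n)
    (hadj : ∀ i, G.Adj (f i).1 (f i).2)
    (hdisj : ∀ i j, i ≠ j →
      Disjoint ({(f i).1, (f i).2} : Finset (Fin n)) {(f j).1, (f j).2}) :
    ∃ g : Fin (k + 1) → Fin n × Fin n, (∀ i, G.Adj (g i).1 (g i).2) ∧
      ∀ i j, i ≠ j →
        Disjoint ({(g i).1, (g i).2} : Finset (Fin n)) {(g j).1, (g j).2} := by
  classical
  set P : Fin k → Finset (Fin n) := fun i => {(f i).1, (f i).2} with hP
  set S : Finset (Fin n) := Finset.univ.biUnion P with hS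
  have hmemS : ∀ i, (f i).1 ∈ S ∧ (f i).2 ∈ S := by
    intro i
    constructor <;> exact Finset.mem_biUnion.mpr ⟨i, Finset.mem_univ _, by simp [hP]⟩
  have hnotS : ∀ v, v ∉ S → ∀ j, v ∉ P j := by
    intro v hv j hj
    exact hv (Finset.mem_biUnion.mpr ⟨j, Finset.mem_univ _, hj⟩)
  have hPcard : ∀ i, (P i).card = 2 := by
    intro i
    rw [hP]
    rw [Finset.card_insert_of_notMem (by simp [(hadj i).ne]), Finset.card_singleton]
  have hScard : S.card = 2 * k := by
    rw [hS, Finset.card_biUnion (fun i _ j _ hij => hdisj i j hij)]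
    rw [Finset.sum_congr rfl (fun i _ => hPcard i)]
    simp [mul_comm]
  by_cases hcase : ∃ u v, u ∉ S ∧ v ∉ S ∧ G.Adj u v
  · obtain ⟨u, v, hu, hv, huv⟩ := hcase
    refine ⟨Fin.cons (u, v) f, ?_, ?_⟩
    · intro i
      refine Fin.cases ?_ ?_ i
      · simpa using huv
      · intro j; simpa using hadj j
    · intro i j hij
      have key : ∀ a b : Fin n, a ∉ S → b ∉ S → a ≠ b → ∀ j' : Fin k,
          Disjoint ({a, b} : Finset (Fin n)) {(f j').1, (f j').2} := by
        intro a b ha hb hab j'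
        rw [Finset.disjoint_left]
        intro x hx hx'
        rcases Finset.mem_insert.mp hx with h | h
        · exact hnotS a ha j' (h ▸ hx')
        · exact hnotS b hb j' ((Finset.mem_singleton.mp h) ▸ hx')
      induction i using Fin.cases with
      | zero =>
        induction j using Fin.cases with
        | zero => exact absurd rfl hij
        | succ j' =>
          simpa using key u v hu hv huv.ne j'
      | succ i' =>
        induction j using Fin.cases with
        | zero =>
          exact Disjoint.symm (by simpa using key u v hu hv huv.ne i')
        | succ j' =>
          have : i' ≠ j' := fun h => hij (by rw [h])
          simpa using hdisj i' j' this
  · push_neg at hcase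
    by_cases hswap : ∃ i : Fin k, ∃ u w : Fin n, u ∉ S ∧ w ∉ S ∧ u ≠ w ∧
        G.Adj u (f i).1 ∧ G.Adj w (f i).2
    · obtain ⟨i, u, w, hu, hw, huw, hux, hwy⟩ := hswap
      set x := (f i).1
      set y := (f i).2
      have hxS : x ∈ S := (hmemS i).1
      have hyS : y ∈ S := (hmemS i).2
      refine ⟨Fin.cons (y, w) (Function.update f i (u, x)), ?_, ?_⟩
      · intro j
        refine Fin.cases ?_ ?_ j
        · simpa using hwy.symm
        · intro j'
          by_cases h : j' = i
          · subst h; simpa [Function.update_self] using hux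
          · simpa [Function.update_of_ne h] using hadj j'
      · -- disjointness
        have hPnew : ∀ j' : Fin k,
            ({(Function.update f i (u, x) j').1, (Function.update f i (u, x) j').2} :
              Finset (Fin n)) = if j' = i then {u, x} else P j' := by
          intro j'
          by_cases h : j' = i
          · subst h; simp [Function.update_self]
          · rw [Function.update_of_ne h, if_neg h]
        have hxPj : ∀ j', j' ≠ i → x ∉ P j' := by
          intro j' hj' hx
          exact (Finset.disjoint_left.mp (hdisj i j' (fun h => hj' h.symm)))
            (by simp [hP]; exact Or.inl rfl) hx
        have hyPj : ∀ j', j' ≠ i → y ∉ P j' := by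
          intro j' hj' hy
          exact (Finset.disjoint_left.mp (hdisj i j' (fun h => hj' h.symm)))
            (by simp [hP]; exact Or.inr rfl) hy
        have hd0 : ∀ j' : Fin k, Disjoint ({y, w} : Finset (Fin n))
            ({(Function.update f i (u, x) j').1, (Function.update f i (u, x) j').2} :
              Finset (Fin n)) := by
          intro j'
          rw [hPnew j']
          by_cases h : j' = i
          · rw [if_pos h]
            rw [Finset.disjoint_left]
            intro a ha ha'
            rcases Finset.mem_insert.mp ha with h1 | h1 <;>
              rcases Finset.mem_insert.mp ha' with h2 | h2
            · exact hu (by rw [← h2, h1]; exact hyS)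
            · exact (hadj i).ne ((Finset.mem_singleton.mp h2).symm.trans h1)
            · exact huw (by rw [← h2, Finset.mem_singleton.mp h1])
            · exact hw (by rw [← Finset.mem_singleton.mp h1,
                Finset.mem_singleton.mp h2]; exact hxS)
          · rw [if_neg h]
            rw [Finset.disjoint_left]
            intro a ha ha'
            rcases Finset.mem_insert.mp ha with h1 | h1
            · exact hyPj j' h (h1 ▸ ha')
            · exact hnotS w hw j' ((Finset.mem_singleton.mp h1) ▸ ha')
        intro a b hab
        induction a using Fin.cases with
        | zero =>
          induction b using Fin.cases with
          | zero => exact absurd rfl hab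
          | succ b' => simpa using hd0 b'
        | succ a' =>
          induction b using Fin.cases with
          | zero => exact Disjoint.symm (by simpa using hd0 a')
          | succ b' =>
            have hab' : a' ≠ b' := fun h => hab (by rw [h])
            simp only [Fin.cons_succ]
            rw [hPnew a', hPnew b']
            by_cases ha : a' = i
            · have hbi : b' ≠ i := fun h => hab' (ha.trans h.symm)
              rw [if_pos ha, if_neg hbi]
              rw [Finset.disjoint_left]
              intro c hc hc'
              rcases Finset.mem_insert.mp hc with h1 | h1
              · exact hnotS u hu b' (h1 ▸ hc')
              · exact hxPj b' hbi ((Finset.mem_singleton.mp h1) ▸ hc')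
            · rw [if_neg ha]
              by_cases hb : b' = i
              · rw [if_pos hb]
                rw [Finset.disjoint_right]
                intro c hc hc'
                rcases Finset.mem_insert.mp hc with h1 | h1
                · exact hnotS u hu a' (h1 ▸ hc')
                · exact hxPj a' ha ((Finset.mem_singleton.mp h1) ▸ hc')
              · rw [if_neg hb]
                exact hdisj a' b' hab'
    · -- counting contradiction
      exfalso
      push_neg at hswap
      set U : Finset (Fin n) := Sᶜ with hU
      have hUcard : U.card = n - 2 * k := by
        rw [hU, Finset.card_compl, hScard, Fintype.card_fin]
      have hU3 : d + 2 ≤ U.card := by omega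
      have hmemU : ∀ v, v ∈ U ↔ v ∉ S := fun v => Finset.mem_compl
      have hNsub : ∀ u ∈ U, G.neighborFinset u ⊆ S := by
        intro u hu v hv
        by_contra hvS
        exact hcase u v ((hmemU u).mp hu) hvS ((SimpleGraph.mem_neighborFinset G u v).mp hv)
      set c : Fin n → ℕ := fun s => (U.filter (fun u => G.Adj u s)).card with hc
      -- bound : c s + 2 ≤ U.card for endpoints
      have hcs : ∀ i : Fin k, c (f i).1 + 2 ≤ U.card ∧ c (f i).2 + 2 ≤ U.card := by
        have key : ∀ s t : Fin n, G.Adj s t → t ∈ S → c s + 2 ≤ U.card := by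
          intro s t hst htS
          have hsub : U.filter (fun u => G.Adj u s) ⊆ (G.neighborFinset s).erase t := by
            intro a ha
            rw [Finset.mem_filter] at ha
            rw [Finset.mem_erase, SimpleGraph.mem_neighborFinset]
            exact ⟨fun h => ((hmemU a).mp ha.1) (h ▸ htS), ha.2.symm⟩
          have h1 : c s ≤ (G.neighborFinset s).card - 1 := by
            have := Finset.card_le_card hsub
            rwa [Finset.card_erase_of_mem ((SimpleGraph.mem_neighborFinset G s t).mpr hst)]
              at this
          have h2 : 1 ≤ (G.neighborFinset s).card := by
            exact Finset.card_pos.mpr ⟨t, (SimpleGraph.mem_neighborFinset G s t).mpr hst⟩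
          have h3 := hmax s
          rw [← SimpleGraph.card_neighborFinset_eq_degree] at h3
          omega
        intro i
        exact ⟨key (f i).1 (f i).2 (hadj i) (hmemS i).2,
               key (f i).2 (f i).1 (hadj i).symm (hmemS i).1⟩
      -- per-pair bound
      have hpair : ∀ i : Fin k, c (f i).1 + c (f i).2 + 1 ≤ U.card := by
        intro i
        rcases Finset.eq_empty_or_nonempty (U.filter (fun u => G.Adj u (f i).1)) with h | h
        · have : c (f i).1 = 0 := by rw [hc]; simp [h]
          have := (hcs i).2
          omega
        · rcases Finset.eq_empty_or_nonempty (U.filter (fun u => G.Adj u (f i).2)) with h' | h'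
          · have : c (f i).2 = 0 := by rw [hc]; simp [h']
            have := (hcs i).1
            omega
          · obtain ⟨b, hb⟩ := h'
            rw [Finset.mem_filter] at hb
            have hsub1 : U.filter (fun u => G.Adj u (f i).1) ⊆ {b} := by
              intro a ha
              rw [Finset.mem_filter] at ha
              rw [Finset.mem_singleton]
              by_contra hne
              exact hswap i a b ((hmemU a).mp ha.1) ((hmemU b).mp hb.1) hne ha.2 hb.2
            obtain ⟨a, ha⟩ := h
            rw [Finset.mem_filter] at ha
            have hab : a = b := Finset.mem_singleton.mp (hsub1 (by
              rw [Finset.mem_filter]; exact ha))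
            have hsub2 : U.filter (fun u => G.Adj u (f i).2) ⊆ {b} := by
              intro z hz
              rw [Finset.mem_filter] at hz
              rw [Finset.mem_singleton]
              by_contra hne
              exact hswap i b z ((hmemU b).mp hb.1) ((hmemU z).mp hz.1)
                (fun h => hne h.symm) (hab ▸ ha.2) hz.2
            have h1 : c (f i).1 ≤ 1 := by
              rw [hc]; simpa using Finset.card_le_card hsub1
            have h2 : c (f i).2 ≤ 1 := by
              rw [hc]; simpa using Finset.card_le_card hsub2
            omega
      -- degree decomposition
      have hdeg : ∀ u ∈ U, G.degree u = ∑ i : Fin k, (G.neighborFinset u ∩ P i).card := by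
        intro u hu
        have hNeq : G.neighborFinset u = Finset.univ.biUnion
            (fun i => G.neighborFinset u ∩ P i) := by
          ext a
          simp only [Finset.mem_biUnion, Finset.mem_inter, Finset.mem_univ, true_and]
          constructor
          · intro ha
            have haS := hNsub u hu ha
            rw [hS, Finset.mem_biUnion] at haS
            obtain ⟨i, _, hi⟩ := haS
            exact ⟨i, ha, hi⟩
          · rintro ⟨i, ha, _⟩; exact ha
        rw [← SimpleGraph.card_neighborFinset_eq_degree]
        conv_lhs => rw [hNeq]
        exact Finset.card_biUnion (fun i _ j _ hij =>
            Finset.disjoint_of_subset_left Finset.inter_subset_right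
              (Finset.disjoint_of_subset_right Finset.inter_subset_right (hdisj i j hij)))
      -- column sums
      have hcol : ∀ i : Fin k,
          ∑ u ∈ U, (G.neighborFinset u ∩ P i).card = c (f i).1 + c (f i).2 := by
        intro i
        have hsplit : ∀ u : Fin n, (G.neighborFinset u ∩ P i).card =
            (if G.Adj u (f i).1 then 1 else 0) + (if G.Adj u (f i).2 then 1 else 0) := by
          intro u
          have hxy : (f i).1 ≠ (f i).2 := (hadj i).ne
          have : G.neighborFinset u ∩ P i =
              (G.neighborFinset u ∩ {(f i).1}) ∪ (G.neighborFinset u ∩ {(f i).2}) := by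
            show G.neighborFinset u ∩ ({(f i).1, (f i).2} : Finset (Fin n)) = _
            rw [Finset.insert_eq, Finset.inter_union_distrib_left]
          have e1 : ∀ a : Fin n, (G.neighborFinset u ∩ ({a} : Finset (Fin n))).card =
              if G.Adj u a then 1 else 0 := by
            intro a
            by_cases h : G.Adj u a
            · rw [if_pos h,
                Finset.inter_singleton_of_mem ((SimpleGraph.mem_neighborFinset G u _).mpr h)]
              exact Finset.card_singleton _
            · rw [if_neg h, Finset.inter_singleton_of_notMem
                (fun hmem => h ((SimpleGraph.mem_neighborFinset G u _).mp hmem))]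
              exact Finset.card_empty
          rw [this, Finset.card_union_of_disjoint, e1, e1]
          exact Finset.disjoint_of_subset_left Finset.inter_subset_right
              (Finset.disjoint_of_subset_right Finset.inter_subset_right
                (Finset.disjoint_singleton.mpr hxy))
        calc ∑ u ∈ U, (G.neighborFinset u ∩ P i).card
            = ∑ u ∈ U, ((if G.Adj u (f i).1 then 1 else 0)
              + (if G.Adj u (f i).2 then 1 else 0)) := by
              exact Finset.sum_congr rfl (fun u _ => hsplit u)
          _ = c (f i).1 + c (f i).2 := by
              have hcx : ∀ s, c s = ∑ u ∈ U, (if G.Adj u s then 1 else 0) :=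
                fun s => Finset.card_filter _ _
              rw [Finset.sum_add_distrib, hcx (f i).1, hcx (f i).2]
      -- assemble
      have hlow : d * U.card ≤ ∑ u ∈ U, G.degree u := by
        calc d * U.card = U.card • d := by rw [smul_eq_mul, mul_comm]
          _ ≤ ∑ u ∈ U, G.degree u := Finset.card_nsmul_le_sum U _ d (fun u _ => hmin u)
      have hswap_sum : ∑ u ∈ U, G.degree u = ∑ i : Fin k, (c (f i).1 + c (f i).2) := by
        calc ∑ u ∈ U, G.degree u
            = ∑ u ∈ U, ∑ i : Fin k, (G.neighborFinset u ∩ P i).card :=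
              Finset.sum_congr rfl (fun u hu => hdeg u hu)
          _ = ∑ i : Fin k, ∑ u ∈ U, (G.neighborFinset u ∩ P i).card := Finset.sum_comm
          _ = ∑ i : Fin k, (c (f i).1 + c (f i).2) :=
              Finset.sum_congr rfl (fun i _ => hcol i)
      have hhigh : ∑ i : Fin k, (c (f i).1 + c (f i).2) + k ≤ k * U.card := by
        have h1 : ∑ i : Fin k, (c (f i).1 + c (f i).2 + 1) ≤ ∑ _i : Fin k, U.card :=
          Finset.sum_le_sum (fun i _ => hpair i)
        have h2 : ∑ i : Fin k, (c (f i).1 + c (f i).2 + 1)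
            = ∑ i : Fin k, (c (f i).1 + c (f i).2) + ∑ _i : Fin k, 1 :=
          Finset.sum_add_distrib
        have h3 : (∑ _i : Fin k, (1:ℕ)) = k := by simp
        have h4 : (∑ _i : Fin k, U.card) = k * U.card := by
          rw [Finset.sum_const, Finset.card_univ, Fintype.card_fin, smul_eq_mul]
        omega
      have hmul : k * U.card ≤ d * U.card := Nat.mul_le_mul_right _ hk
      have hk0 : k = 0 := by omega
      have hkU : k * U.card = 0 := by rw [hk0, Nat.zero_mul]
      have hdU : 1 * 3 ≤ d * U.card := Nat.mul_le_mul hd (by omega)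
      omega

/-- Let `d ≥ 1` and `n ≥ 3d + 2`. If `G` is an `n`-vertex graph with minimum degree at
least `d` and maximum degree at most `n - 2d - 1`, then `G` admits a matching of size
`d + 1`. -/
theorem statement9 (d n : ℕ) (hd : 1 ≤ d) (hn : 3 * d + 2 ≤ n)
    (G : SimpleGraph (Fin n)) [DecidableRel G.Adj]
    (hmin : ∀ v, d ≤ G.degree v)
    (hmax : ∀ v, G.degree v + 2 * d + 1 ≤ n) :
    ∃ M : G.Subgraph, M.IsMatching ∧ M.edgeSet.ncard = d + 1 := by
  classical
  have main : ∀ k, k ≤ d + 1 → ∃ f : Fin k → Fin n × Fin n,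
      (∀ i, G.Adj (f i).1 (f i).2) ∧
      ∀ i j, i ≠ j →
        Disjoint ({(f i).1, (f i).2} : Finset (Fin n)) {(f j).1, (f j).2} := by
    intro k
    induction k with
    | zero => exact fun _ => ⟨Fin.elim0, fun i => i.elim0, fun i => i.elim0⟩
    | succ k ih =>
      intro hk
      obtain ⟨f, h1, h2⟩ := ih (by omega)
      exact statement9_extend d n k hd hn G hmin hmax (by omega) f h1 h2
  obtain ⟨f, hadj, hdisj⟩ := main (d + 1) le_rfl
  refine ⟨⨆ i, G.subgraphOfAdj (hadj i), ?_, ?_⟩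
  · apply SimpleGraph.Subgraph.IsMatching.iSup
      (fun i => SimpleGraph.Subgraph.IsMatching.subgraphOfAdj _)
    intro i j hij
    rw [SimpleGraph.support_subgraphOfAdj, SimpleGraph.support_subgraphOfAdj]
    have hfd := Finset.disjoint_left.mp (hdisj i j hij)
    rw [Set.disjoint_left]
    intro a ha hb
    simp only [Set.mem_insert_iff, Set.mem_singleton_iff] at ha hb
    have ha' : a ∈ ({(f i).1, (f i).2} : Finset (Fin n)) := by
      rcases ha with h | h <;> simp [h]
    have hb' : a ∈ ({(f j).1, (f j).2} : Finset (Fin n)) := by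
      rcases hb with h | h <;> simp [h]
    exact hfd ha' hb'
  · have hinj : Function.Injective (fun i : Fin (d + 1) => s((f i).1, (f i).2)) := by
      intro i j h
      by_contra hij
      have hfd := Finset.disjoint_left.mp (hdisj i j hij)
      simp only [Sym2.eq, Sym2.rel_iff', Prod.mk.injEq, Prod.swap_prod_mk] at h
      rcases h with ⟨h1, _⟩ | ⟨h1, _⟩
      · exact hfd (a := (f i).1) (by simp) (by rw [h1]; simp)
      · exact hfd (a := (f i).1) (by simp) (by rw [h1]; simp)
    have hE : (⨆ i, G.subgraphOfAdj (hadj i)).edgeSet =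
        Set.range (fun i : Fin (d + 1) => s((f i).1, (f i).2)) := by
      rw [SimpleGraph.Subgraph.edgeSet_iSup]
      simp only [SimpleGraph.edgeSet_subgraphOfAdj]
      exact Set.iUnion_singleton_eq_range _
    rw [hE]
    have : Set.range (fun i : Fin (d + 1) => s((f i).1, (f i).2)) =
        ↑(Finset.univ.image (fun i : Fin (d + 1) => s((f i).1, (f i).2))) := by
      rw [Finset.coe_image, Finset.coe_univ, Set.image_univ]
    rw [this, Set.ncard_coe_finset, Finset.card_image_of_injective _ hinj,
      Finset.card_univ, Fintype.card_fin]
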